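/- Let A be an n × n real graph Laplacian matrix, let t ≥ 0, and let p ∈ ℝⁿ satisfy p ⪰ 0 and ∑_i p_i = 1. Then the vector q = exp(t·A) *ᵥ p satisfies q ⪰ 0 and ∑_i q_i = 1. -/

import Mathlib

open Matrix

section ExpHelpers

attribute [local instance] Matrix.linftyOpNormedRing Matrix.linftyOpNormedAlgebra
  Matrix.linftyOpNormedSpace

-- entry AddMonoidHom
private def entryHom {n : ℕ} (i j : Fin n) : Matrix (Fin n) (Fin n) ℝ →+ ℝ where
  toFun X := X i j
  map_zero' := rfl
  map_add' _ _ := rfl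

private lemma entryHom_cont {n : ℕ} (i j : Fin n) :
    Continuous (entryHom i j) := by
  exact (continuous_apply j).comp (continuous_apply i)

-- column sums of powers vanish
private lemma colsum_pow {n : ℕ} (B : Matrix (Fin n) (Fin n) ℝ)
    (hB : ∀ j, ∑ i, B i j = 0) (m : ℕ) (j : Fin n) :
    ∑ i, (B ^ (m + 1)) i j = 0 := by
  induction m generalizing j with
  | zero => simpa using hB j
  | succ m ih =>
    have : B ^ (m + 2) = B * B ^ (m + 1) := pow_succ' B (m+1)
    rw [this]
    simp only [Matrix.mul_apply]
    rw [Finset.sum_comm]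
    simp only [← Finset.sum_mul]
    calc ∑ k, (∑ i, B i k) * (B ^ (m+1)) k j = ∑ k : Fin n, 0 * (B^(m+1)) k j := by
          refine Finset.sum_congr rfl fun k _ => by rw [hB k]
      _ = 0 := by simp

private lemma pow_nonneg_entries {n : ℕ} (M : Matrix (Fin n) (Fin n) ℝ)
    (hM : ∀ i j, 0 ≤ M i j) (m : ℕ) (i j : Fin n) : 0 ≤ (M ^ m) i j := by
  induction m generalizing i j with
  | zero => by_cases h : i = j <;> simp [pow_zero, Matrix.one_apply, h]
  | succ m ih =>
    rw [pow_succ, Matrix.mul_apply]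
    exact Finset.sum_nonneg fun k _ => mul_nonneg (ih i k) (hM k j)

-- entries of exp of entrywise-nonneg matrix are nonneg
private lemma exp_entry_nonneg {n : ℕ} (M : Matrix (Fin n) (Fin n) ℝ)
    (hM : ∀ i j, 0 ≤ M i j) (i j : Fin n) : 0 ≤ (NormedSpace.exp M) i j := by
  have h := NormedSpace.exp_series_hasSum_exp' (𝕂 := ℝ) M
  have h2 : HasSum (fun m : ℕ => (((Nat.factorial m : ℝ))⁻¹ • M ^ m) i j) ((NormedSpace.exp M) i j) :=
    h.map (entryHom i j) (entryHom_cont i j)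
  refine hasSum_le (fun m => ?_) hasSum_zero h2
  simp only [Matrix.smul_apply, smul_eq_mul]
  exact mul_nonneg (by positivity) (pow_nonneg_entries M hM m i j)

private def colsumHom {n : ℕ} (j : Fin n) : Matrix (Fin n) (Fin n) ℝ →+ ℝ where
  toFun X := ∑ i, X i j
  map_zero' := by simp
  map_add' _ _ := by simp [Finset.sum_add_distrib]

private lemma colsumHom_cont {n : ℕ} (j : Fin n) : Continuous (colsumHom j) := by
  have : Continuous fun X : Matrix (Fin n) (Fin n) ℝ => ∑ i, X i j :=
    continuous_finset_sum _ fun i _ => (continuous_apply j).comp (continuous_apply i)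
  exact this

private lemma exp_colsum {n : ℕ} (B : Matrix (Fin n) (Fin n) ℝ)
    (hB : ∀ j, ∑ i, B i j = 0) (j : Fin n) :
    ∑ i, (NormedSpace.exp B) i j = 1 := by
  have h := NormedSpace.exp_series_hasSum_exp' (𝕂 := ℝ) B
  have h2 : HasSum (fun m : ℕ => colsumHom j (((Nat.factorial m : ℝ))⁻¹ • B ^ m))
      (∑ i, (NormedSpace.exp B) i j) := h.map (colsumHom j) (colsumHom_cont j)
  have h3 : (fun m : ℕ => colsumHom j (((Nat.factorial m : ℝ))⁻¹ • B ^ m)) =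
      fun m : ℕ => if m = 0 then (1 : ℝ) else 0 := by
    funext m
    cases m with
    | zero =>
      simp [colsumHom, Matrix.one_apply, Finset.sum_ite_eq]
    | succ m =>
      simp only [colsumHom, AddMonoidHom.coe_mk, ZeroHom.coe_mk, Matrix.smul_apply,
        smul_eq_mul, ← Finset.mul_sum]
      rw [colsum_pow B hB m j]
      simp
  rw [h3] at h2
  exact h2.unique (hasSum_ite_eq 0 1)

theorem exp_maps_prob_to_prob'
    {n : ℕ} (A : Matrix (Fin n) (Fin n) ℝ)
    (hA : (∀ k ℓ : Fin n, k ≠ ℓ → 0 ≤ A k ℓ) ∧ (∀ k : Fin n, A k k ≤ 0) ∧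
    (∀ ℓ : Fin n, ∑ k : Fin n, A k ℓ = 0))
    (t : ℝ) (ht : 0 ≤ t)
    (p : Fin n → ℝ) (hp : ∀ i, 0 ≤ p i) (hpsum : ∑ i : Fin n, p i = 1) :
    (∀ i, 0 ≤ (NormedSpace.exp (t • A) *ᵥ p) i) ∧
      ∑ i : Fin n, (NormedSpace.exp (t • A) *ᵥ p) i = 1 := by
  obtain ⟨hoff, hdiag, hcol⟩ := hA
  set B : Matrix (Fin n) (Fin n) ℝ := t • A with hBdef
  have hBcol : ∀ j, ∑ i, B i j = 0 := by
    intro j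
    simp only [hBdef, Matrix.smul_apply, smul_eq_mul, ← Finset.mul_sum, hcol j, mul_zero]
  -- nonnegativity of entries of exp B
  have hexp_nonneg : ∀ i j, 0 ≤ (NormedSpace.exp B) i j := by
    set c : ℝ := ∑ k, -(B k k) with hcdef
    have hterm : ∀ k, 0 ≤ -(B k k) := fun k => by
      simp only [hBdef, Matrix.smul_apply, smul_eq_mul]
      nlinarith [hdiag k]
    have hc : ∀ k, -(B k k) ≤ c :=
      fun k => Finset.single_le_sum (fun i _ => hterm i) (Finset.mem_univ k)
    set M : Matrix (Fin n) (Fin n) ℝ := B + c • (1 : Matrix (Fin n) (Fin n) ℝ) with hMdef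
    have hM : ∀ i j, 0 ≤ M i j := by
      intro i j
      by_cases hij : i = j
      · subst hij
        simp only [hMdef, Matrix.add_apply, Matrix.smul_apply, Matrix.one_apply_eq,
          smul_eq_mul, mul_one]
        linarith [hc i]
      · simp only [hMdef, Matrix.add_apply, Matrix.smul_apply, Matrix.one_apply_ne hij,
          smul_eq_mul, mul_zero, add_zero, hBdef]
        exact mul_nonneg ht (hoff i j hij)
    have hBM : B = M + (-c) • (1 : Matrix (Fin n) (Fin n) ℝ) := by
      simp [hMdef, add_assoc, ← add_smul]
    have hcomm : Commute M ((-c) • (1 : Matrix (Fin n) (Fin n) ℝ)) :=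
      (Commute.one_right M).smul_right (-c)
    have hsplit : NormedSpace.exp B =
        NormedSpace.exp M * NormedSpace.exp ((-c) • (1 : Matrix (Fin n) (Fin n) ℝ)) := by
      rw [hBM]
      exact Matrix.exp_add_of_commute M _ hcomm
    have hdiagexp : NormedSpace.exp ((-c) • (1 : Matrix (Fin n) (Fin n) ℝ)) =
        Real.exp (-c) • (1 : Matrix (Fin n) (Fin n) ℝ) := by
      have h1 : ((-c) • (1 : Matrix (Fin n) (Fin n) ℝ)) =
          Matrix.diagonal (fun _ => (-c : ℝ)) := by
        ext i j
        by_cases hij : i = j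
        · subst hij; simp
        · simp [Matrix.one_apply_ne hij, Matrix.diagonal_apply_ne _ hij]
      rw [h1, Matrix.exp_diagonal]
      ext i j
      by_cases hij : i = j
      · subst hij
        simp [Matrix.diagonal_apply_eq, Pi.exp_def, Real.exp_eq_exp_ℝ]
      · simp [Matrix.diagonal_apply_ne _ hij, Matrix.one_apply_ne hij]
    intro i j
    rw [hsplit, hdiagexp, Matrix.mul_smul, Matrix.mul_one, Matrix.smul_apply, smul_eq_mul]
    exact mul_nonneg (Real.exp_pos _).le (exp_entry_nonneg M hM i j)
  have hexp_colsum := exp_colsum B hBcol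
  constructor
  · intro i
    rw [Matrix.mulVec, dotProduct]
    exact Finset.sum_nonneg fun j _ => mul_nonneg (hexp_nonneg i j) (hp j)
  · simp only [Matrix.mulVec, dotProduct]
    rw [Finset.sum_comm]
    calc ∑ j, ∑ i, (NormedSpace.exp B) i j * p j
        = ∑ j, (∑ i, (NormedSpace.exp B) i j) * p j := by
          simp [Finset.sum_mul]
      _ = ∑ j, p j := by
          refine Finset.sum_congr rfl fun j _ => by rw [hexp_colsum j, one_mul]
      _ = 1 := hpsum


end ExpHelpers

/-- An `n × n` real matrix is a graph Laplacian if its off-diagonal entries are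
nonnegative, its diagonal entries are nonpositive, and each column sums to zero. -/
def IsGraphLaplacian {n : ℕ} (A : Matrix (Fin n) (Fin n) ℝ) : Prop :=
  (∀ k ℓ : Fin n, k ≠ ℓ → 0 ≤ A k ℓ) ∧ (∀ k : Fin n, A k k ≤ 0) ∧
    (∀ ℓ : Fin n, ∑ k : Fin n, A k ℓ = 0)

/-- Proposition 6: the exponential flow of a graph Laplacian maps probability
vectors to probability vectors. -/
theorem exp_maps_prob_to_prob
    {n : ℕ} (A : Matrix (Fin n) (Fin n) ℝ)
    (hA : IsGraphLaplacian A)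
    (t : ℝ) (ht : 0 ≤ t)
    (p : Fin n → ℝ) (hp : ∀ i, 0 ≤ p i) (hpsum : ∑ i : Fin n, p i = 1) :
    (∀ i, 0 ≤ (NormedSpace.exp (t • A) *ᵥ p) i) ∧
      ∑ i : Fin n, (NormedSpace.exp (t • A) *ᵥ p) i = 1 :=
  exp_maps_prob_to_prob' A hA t ht p hp hpsum
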